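/- Let u be a compactly supported distribution on R^n of order r, and fix d ∈ R. Writing u = Σ_{|α| ≤ r} (−1)^{|α|} ∂^α u_α with each u_α a compactly supported distribution of order 0, the partial sum over multi-indices with |α| < d − n satisfies: for each such α and each Schwartz function φ, |λ^{d−n} ((−1)^{|α|} ∂^α u_α)(φ ∘ δ_λ^{-1})| ≤ λ^{d−n−|α|} C sup|∂^α φ| for some C > 0, and hence λ^d δ_λ^* applied to this partial sum converges to 0 in the space of tempered distributions as λ → 0^+, where δ_λ(x) = λx and (δ_λ^* u)(f) = λ^{-n} u(f ∘ δ_λ^{-1}). -/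

import Mathlib

open Filter

/-- Partial derivative of a function on `ℝⁿ` in the `i`-th coordinate direction. -/
noncomputable def pder {n : ℕ} (i : Fin n) (φ : (Fin n → ℝ) → ℂ) : (Fin n → ℝ) → ℂ :=
  fun x => fderiv ℝ φ x (Pi.single i 1)

/-- The iterated partial derivative `∂^α φ` for a multi-index `α`. -/
noncomputable def mDeriv {n : ℕ} (α : Fin n → ℕ) (φ : (Fin n → ℝ) → ℂ) : (Fin n → ℝ) → ℂ :=
  (List.ofFn (fun i : Fin n => (pder i)^[α i])).foldr (· ∘ ·) id φ

lemma fderiv_cmul {E : Type*} [NormedAddCommGroup E] [NormedSpace ℝ E]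
    (a : ℂ) (ψ : E → ℂ) (x : E) :
    fderiv ℝ (fun y => a * ψ y) x = a • fderiv ℝ ψ x := by
  rcases eq_or_ne a 0 with rfl | ha
  · ext v; simp
  by_cases hψ : DifferentiableAt ℝ ψ x
  · exact fderiv_const_mul hψ a
  · rw [fderiv_zero_of_not_differentiableAt hψ,
      fderiv_zero_of_not_differentiableAt]
    · ext v; simp
    intro h
    apply hψ
    have h2 := h.const_mul a⁻¹
    simpa [← mul_assoc, inv_mul_cancel₀ ha] using h2

noncomputable def scaleE (n : ℕ) (c : ℝ) (hc : c ≠ 0) : (Fin n → ℝ) ≃L[ℝ] (Fin n → ℝ) :=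
  { LinearEquiv.smulOfNeZero ℝ (Fin n → ℝ) c hc with
    continuous_toFun := continuous_const_smul c
    continuous_invFun := continuous_const_smul _ }

lemma pder_cmul {n : ℕ} (i : Fin n) (a : ℂ) (ψ : (Fin n → ℝ) → ℂ) :
    pder i (fun x => a * ψ x) = fun x => a * pder i ψ x := by
  funext x
  simp only [pder, fderiv_cmul a ψ x, ContinuousLinearMap.smul_apply, smul_eq_mul]

lemma pder_scale {n : ℕ} (i : Fin n) (c : ℝ) (hc : c ≠ 0) (ψ : (Fin n → ℝ) → ℂ) :
    pder i (fun x => ψ (c • x)) = fun x => (c : ℂ) * pder i ψ (c • x) := by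
  funext x
  have h : (fun x : Fin n → ℝ => ψ (c • x)) = ψ ∘ (scaleE n c hc) := rfl
  simp only [pder, h, ContinuousLinearEquiv.comp_right_fderiv]
  have : (scaleE n c hc : (Fin n → ℝ) →L[ℝ] (Fin n → ℝ)) (Pi.single i 1)
      = c • (Pi.single i 1 : Fin n → ℝ) := rfl
  rw [ContinuousLinearMap.comp_apply, this, map_smul]
  have hx : (scaleE n c hc) x = c • x := rfl
  rw [hx, Complex.real_smul]

lemma pder_iter_cmul {n : ℕ} (i : Fin n) (k : ℕ) (a : ℂ) (ψ : (Fin n → ℝ) → ℂ) :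
    (pder i)^[k] (fun x => a * ψ x) = fun x => a * (pder i)^[k] ψ x := by
  induction k generalizing ψ with
  | zero => simp
  | succ k ih =>
    rw [Function.iterate_succ_apply, Function.iterate_succ_apply, pder_cmul, ih]

lemma pder_iter_scale {n : ℕ} (i : Fin n) (k : ℕ) (c : ℝ) (hc : c ≠ 0)
    (ψ : (Fin n → ℝ) → ℂ) :
    (pder i)^[k] (fun x => ψ (c • x)) = fun x => (c : ℂ) ^ k * (pder i)^[k] ψ (c • x) := by
  induction k generalizing ψ with
  | zero => simp
  | succ k ih =>
    rw [Function.iterate_succ_apply', ih, pder_cmul, pder_scale i c hc]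
    funext x
    rw [Function.iterate_succ_apply']
    ring

lemma foldr_scale {n : ℕ} (c : ℝ) (hc : c ≠ 0) (α : Fin n → ℕ) (l : List (Fin n))
    (ψ : (Fin n → ℝ) → ℂ) :
    (l.map (fun i => (pder i)^[α i])).foldr (· ∘ ·) id (fun x => ψ (c • x))
      = fun x => (c : ℂ) ^ ((l.map α).sum) *
          (l.map (fun i => (pder i)^[α i])).foldr (· ∘ ·) id ψ (c • x) := by
  induction l generalizing ψ with
  | nil => simp
  | cons i l ih =>
    simp only [List.map_cons, List.foldr_cons, Function.comp_apply, List.sum_cons]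
    show (pder i)^[α i] ((l.map (fun i => (pder i)^[α i])).foldr (· ∘ ·) id
        (fun x => ψ (c • x))) = _
    rw [ih, pder_iter_cmul, pder_iter_scale i (α i) c hc]
    funext x
    show _ * (_ * _) = _
    rw [pow_add]
    ring

lemma mDeriv_scale {n : ℕ} (α : Fin n → ℕ) (c : ℝ) (hc : c ≠ 0) (ψ : (Fin n → ℝ) → ℂ) :
    mDeriv α (fun x => ψ (c • x)) = fun x => (c : ℂ) ^ (∑ i, α i) * mDeriv α ψ (c • x) := by
  have h := foldr_scale c hc α (List.finRange n) ψ
  rw [← List.ofFn_eq_map] at h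
  simpa [mDeriv, List.sum_ofFn, ← List.ofFn_eq_map] using h

open Classical in
/-- Let `u = Σ_{|α| ≤ r} (−1)^{|α|} ∂^α u_α` be a compactly supported distribution of
order `r` on `ℝⁿ`, with each `u_α` a compactly supported distribution of order 0
(so bounded by the sup-norm).  Then for each multi-index with `|α| < d − n` the
scaled action satisfies
`|λ^{d−n} ((−1)^{|α|} ∂^α u_α)(φ ∘ δ_λ⁻¹)| ≤ λ^{d−n−|α|} C sup|∂^α φ|`,
and hence `λ^d δ_λ^*` applied to the partial sum over `{|α| ≤ r, |α| < d − n}`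
converges to `0` on Schwartz test functions as `λ → 0⁺`, where `δ_λ(x) = λx` and
`(δ_λ^* u)(f) = λ^{-n} u(f ∘ δ_λ⁻¹)`.  Note that by definition of the
distributional derivative, `((−1)^{|α|} ∂^α u_α)(ψ) = u_α(∂^α ψ)`. -/
theorem scaling_of_low_order_terms_tendsto_zero
    (n r : ℕ) (d : ℝ)
    (u : (Fin n → ℕ) → (((Fin n → ℝ) → ℂ) → ℂ))
    (hord : ∀ α : Fin n → ℕ, ∃ C > (0 : ℝ), ∀ (φ : (Fin n → ℝ) → ℂ) (B : ℝ),
      (∀ x, ‖φ x‖ ≤ B) → ‖u α φ‖ ≤ C * B) :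
    (∀ α : Fin n → ℕ, ((∑ i, α i : ℕ) : ℝ) < d - n →
      ∃ C > (0 : ℝ), ∀ (φ : (Fin n → ℝ) → ℂ) (B lam : ℝ), 0 < lam →
        (∀ x, ‖mDeriv α φ x‖ ≤ B) →
        lam ^ (d - (n : ℝ)) * ‖u α (mDeriv α (fun x => φ (lam⁻¹ • x)))‖ ≤
          lam ^ (d - (n : ℝ) - ((∑ i, α i : ℕ) : ℝ)) * C * B) ∧
    (∀ φ : (Fin n → ℝ) → ℂ,
      (∀ α : Fin n → ℕ, ∃ B : ℝ, ∀ x, ‖mDeriv α φ x‖ ≤ B) →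
      Tendsto
        (fun lam : ℝ =>
          (lam ^ d : ℝ) * ((lam ^ (-(n : ℝ)) : ℝ) *
            ∑ α ∈ (Fintype.piFinset (fun _ : Fin n => Finset.range (r + 1))).filter
                (fun α => (∑ i, α i) ≤ r ∧ ((∑ i, α i : ℕ) : ℝ) < d - n),
              u α (mDeriv α (fun x => φ (lam⁻¹ • x)))))
        (nhdsWithin 0 (Set.Ioi 0)) (nhds 0)) := by
  have key : ∀ α : Fin n → ℕ,
      ∃ C > (0 : ℝ), ∀ (φ : (Fin n → ℝ) → ℂ) (B lam : ℝ), 0 < lam →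
        (∀ x, ‖mDeriv α φ x‖ ≤ B) →
        lam ^ (d - (n : ℝ)) * ‖u α (mDeriv α (fun x => φ (lam⁻¹ • x)))‖ ≤
          lam ^ (d - (n : ℝ) - ((∑ i, α i : ℕ) : ℝ)) * C * B := by
    intro α
    obtain ⟨C, hC, hCb⟩ := hord α
    refine ⟨C, hC, ?_⟩
    intro φ B lam hlam hB
    have hinv : lam⁻¹ ≠ 0 := inv_ne_zero hlam.ne'
    have hmd := mDeriv_scale α lam⁻¹ hinv φ
    have hbound : ∀ x, ‖mDeriv α (fun x => φ (lam⁻¹ • x)) x‖ ≤ lam⁻¹ ^ (∑ i, α i) * B := by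
      intro x
      simp only [hmd]
      rw [norm_mul, norm_pow, Complex.norm_real, Real.norm_eq_abs,
        abs_of_pos (inv_pos.2 hlam)]
      exact mul_le_mul_of_nonneg_left (hB _) (pow_nonneg (inv_pos.2 hlam).le _)
    have h1 := hCb _ _ hbound
    have hsplit : lam ^ (d - (n : ℝ) - ((∑ i, α i : ℕ) : ℝ))
        = lam ^ (d - (n : ℝ)) * lam⁻¹ ^ (∑ i, α i) := by
      rw [Real.rpow_sub hlam, Real.rpow_natCast, inv_pow, div_eq_mul_inv]
    calc lam ^ (d - (n : ℝ)) * ‖u α (mDeriv α (fun x => φ (lam⁻¹ • x)))‖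
        ≤ lam ^ (d - (n : ℝ)) * (C * (lam⁻¹ ^ (∑ i, α i) * B)) :=
          mul_le_mul_of_nonneg_left h1 (Real.rpow_nonneg hlam.le _)
      _ = lam ^ (d - (n : ℝ) - ((∑ i, α i : ℕ) : ℝ)) * C * B := by rw [hsplit]; ring
  refine ⟨fun α _ => key α, ?_⟩
  intro φ hφ
  choose C hCpos hC using key
  choose B hB using hφ
  set S := (Fintype.piFinset (fun _ : Fin n => Finset.range (r + 1))).filter
      (fun α => (∑ i, α i) ≤ r ∧ ((∑ i, α i : ℕ) : ℝ) < d - n) with hS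
  apply squeeze_zero_norm'
    (a := fun lam => ∑ α ∈ S, lam ^ (d - (n : ℝ) - ((∑ i, α i : ℕ) : ℝ)) * C α * B α)
  · filter_upwards [self_mem_nhdsWithin] with lam (hlam : lam ∈ Set.Ioi 0)
    have hlam' : (0 : ℝ) < lam := hlam
    have hnorm : ‖((lam ^ d : ℝ) : ℂ) * (((lam ^ (-(n : ℝ)) : ℝ) : ℂ) *
        ∑ α ∈ S, u α (mDeriv α (fun x => φ (lam⁻¹ • x))))‖
        = lam ^ (d - (n : ℝ)) * ‖∑ α ∈ S, u α (mDeriv α (fun x => φ (lam⁻¹ • x)))‖ := by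
      rw [norm_mul, norm_mul, Complex.norm_real, Complex.norm_real, Real.norm_eq_abs,
        Real.norm_eq_abs, abs_of_pos (Real.rpow_pos_of_pos hlam' _),
        abs_of_pos (Real.rpow_pos_of_pos hlam' _), ← mul_assoc,
        ← Real.rpow_add hlam', sub_eq_add_neg]
    rw [hnorm]
    calc lam ^ (d - (n : ℝ)) * ‖∑ α ∈ S, u α (mDeriv α (fun x => φ (lam⁻¹ • x)))‖
        ≤ lam ^ (d - (n : ℝ)) * ∑ α ∈ S, ‖u α (mDeriv α (fun x => φ (lam⁻¹ • x)))‖ :=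
          mul_le_mul_of_nonneg_left (norm_sum_le _ _) (Real.rpow_nonneg hlam'.le _)
      _ = ∑ α ∈ S, lam ^ (d - (n : ℝ)) * ‖u α (mDeriv α (fun x => φ (lam⁻¹ • x)))‖ :=
          Finset.mul_sum _ _ _
      _ ≤ ∑ α ∈ S, lam ^ (d - (n : ℝ) - ((∑ i, α i : ℕ) : ℝ)) * C α * B α :=
          Finset.sum_le_sum fun α _ => hC α φ (B α) lam hlam' (hB α)
  · rw [show (0 : ℝ) = ∑ α ∈ S, 0 by simp]
    apply tendsto_finset_sum
    intro α hα
    have hmem := (Finset.mem_filter.1 hα).2.2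
    have he : 0 < d - (n : ℝ) - ((∑ i, α i : ℕ) : ℝ) := by linarith
    have h0 : Tendsto (fun lam : ℝ => lam ^ (d - (n : ℝ) - ((∑ i, α i : ℕ) : ℝ)))
        (nhds 0) (nhds 0) := by
      have hcont := (Real.continuousAt_rpow_const 0
        (d - (n : ℝ) - ((∑ i, α i : ℕ) : ℝ)) (Or.inr he.le)).tendsto
      rwa [Real.zero_rpow he.ne'] at hcont
    simpa using (((h0.mono_left nhdsWithin_le_nhds).mul_const (C α)).mul_const (B α))
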